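/- In a finite tree, if a vertex y* lies in the locus Π(Λ) of a set of vertices Λ, then y* lies on the path between some pair of vertices of Λ. Equivalently: if y* is not on the path Γ(λᵢ, λⱼ) for any λᵢ, λⱼ ∈ Λ, then for every probability weight vector w there exists a neighbor y' of y* with Σᵢ wᵢ d²(y', λᵢ) < Σᵢ wᵢ d²(y*, λᵢ), so y* is not a Fréchet mean. -/

import Mathlib

open SimpleGraph

lemma takeUntil_getVert_one {V : Type*} [DecidableEq V] {G : SimpleGraph V} {u x v : V}
    (p : G.Walk u x) (h : v ∈ p.support) (hne : u ≠ v) :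
    (p.takeUntil v h).getVert 1 = p.getVert 1 := by
  cases p with
  | nil =>
    rw [Walk.mem_support_nil_iff] at h
    exact absurd h.symm hne
  | cons r q =>
    simp only [Walk.takeUntil, dif_neg hne]
    exact (Walk.snd_cons _ _).trans (Walk.snd_cons _ _).symm

lemma tree_path_concat {V : Type*} [DecidableEq V] {G : SimpleGraph V} (hT : G.IsTree)
    {y a b : V} (p : G.Walk y a) (q : G.Walk y b) (hp : p.IsPath) (hq : q.IsPath)
    (hne : p.getVert 1 ≠ q.getVert 1) :
    G.dist a b = p.length + q.length := by
  -- the supports meet only at y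
  have hdisj : ∀ v, v ∈ p.support → v ∈ q.support → v = y := by
    intro v hvp hvq
    by_contra hvy
    have h1 : (p.takeUntil v hvp) = (q.takeUntil v hvq) :=
      (hT.existsUnique_path y v).unique (hp.takeUntil hvp) (hq.takeUntil hvq)
    have h2 := takeUntil_getVert_one p hvp (fun h => hvy h.symm)
    have h3 := takeUntil_getVert_one q hvq (fun h => hvy h.symm)
    exact hne (by rw [← h2, ← h3, h1])
  -- construct the path from a to b through y
  set r : G.Walk a b := p.reverse.append q with hr
  have hrpath : r.IsPath := by
    rw [Walk.isPath_def, Walk.support_append]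
    apply List.Nodup.append
    · exact ((Walk.isPath_def _).mp hp.reverse)
    · exact (((Walk.isPath_def _).mp hq)).tail
    · intro v hv1 hv2
      rw [Walk.support_reverse, List.mem_reverse] at hv1
      have hvq : v ∈ q.support := List.mem_of_mem_tail hv2
      have := hdisj v hv1 hvq
      subst this
      have hnodup := (Walk.isPath_def _).mp hq
      have : q.support = v :: q.support.tail := by
        rw [← Walk.support_eq_cons]
      rw [this] at hnodup
      exact (List.nodup_cons.mp hnodup).1 hv2
  have hrlen : r.length = p.length + q.length := by
    rw [hr, Walk.length_append, Walk.length_reverse]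
  -- in a tree every path realizes the distance
  obtain ⟨s, hs⟩ := hT.isConnected.exists_walk_length_eq_dist a b
  have hbp : s.bypass.IsPath := Walk.bypass_isPath s
  have heq : r = s.bypass := (hT.existsUnique_path a b).unique hrpath hbp
  have h1 : G.dist a b ≤ r.length := dist_le r
  have h2 : r.length ≤ G.dist a b := by
    rw [heq, ← hs]; exact Walk.length_bypass_le s
  omega

/-- In a finite tree, a vertex lying on no path between points of `Λ` admits,
for every probability weight vector, a neighbor with strictly smaller Fréchet
variance; hence it is not a Fréchet mean. -/
theorem off_path_vertex_not_frechet_mean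
    {V : Type*} [Fintype V] [DecidableEq V]
    (G : SimpleGraph V) (hT : G.IsTree)
    (Λ : Finset V) (hΛ : Λ.Nonempty) (ystar : V)
    (hoff : ∀ a ∈ Λ, ∀ b ∈ Λ, G.dist a ystar + G.dist ystar b ≠ G.dist a b)
    (w : V → ℝ) (hw : ∀ x, 0 ≤ w x) (hsum : ∑ x ∈ Λ, w x = 1) :
    ∃ y' : V, G.Adj ystar y' ∧
      ∑ x ∈ Λ, w x * (G.dist y' x : ℝ) ^ 2
        < ∑ x ∈ Λ, w x * (G.dist ystar x : ℝ) ^ 2 := by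
  have hconn := hT.isConnected
  -- every point of Λ differs from ystar
  have hney : ∀ a ∈ Λ, ystar ≠ a := by
    intro a ha h
    exact hoff a ha a ha (by rw [← h]; simp)
  obtain ⟨l0, hl0⟩ := hΛ
  -- a geodesic (shortest path) from ystar to l0
  obtain ⟨p₀, hp₀⟩ := hconn.exists_walk_length_eq_dist ystar l0
  set P : G.Walk ystar l0 := p₀.bypass with hP
  have hPpath : P.IsPath := Walk.bypass_isPath p₀
  have hPlen : P.length = G.dist ystar l0 := by
    have h1 : G.dist ystar l0 ≤ P.length := dist_le P
    have h2 : P.length ≤ p₀.length := Walk.length_bypass_le p₀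
    omega
  have hPnotnil : ¬ P.Nil := Walk.not_nil_of_ne (hney l0 hl0)
  refine ⟨P.getVert 1, Walk.adj_snd hPnotnil, ?_⟩
  set y' := P.getVert 1 with hy'
  -- key: the distance from y' to every b ∈ Λ is one less
  have key : ∀ b ∈ Λ, G.dist y' b + 1 = G.dist ystar b := by
    intro b hb
    obtain ⟨q₀, hq₀⟩ := hconn.exists_walk_length_eq_dist ystar b
    set Q : G.Walk ystar b := q₀.bypass with hQ
    have hQpath : Q.IsPath := Walk.bypass_isPath q₀
    have hQlen : Q.length = G.dist ystar b := by
      have h1 : G.dist ystar b ≤ Q.length := dist_le Q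
      have h2 : Q.length ≤ q₀.length := Walk.length_bypass_le q₀
      omega
    by_cases hcase : Q.getVert 1 = y'
    · -- Q starts with the same edge; its tail gives the bound
      have hQnotnil : ¬ Q.Nil := Walk.not_nil_of_ne (hney b hb)
      obtain ⟨u, hadj, q, hq⟩ := Walk.not_nil_iff.mp hQnotnil
      have hu : u = y' := by
        rw [← hcase, hq]; exact (Walk.snd_cons _ _).symm
      subst hu
      have hlen : q.length + 1 = G.dist ystar b := by
        have := hQlen
        rw [hq] at this
        simpa [Walk.length_cons] using this
      have hle : G.dist y' b ≤ q.length := dist_le q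
      have hge : G.dist ystar b ≤ 1 + G.dist y' b := by
        have htri := hconn.dist_triangle (u := ystar) (v := y') (w := b)
        have h1 : G.dist ystar y' ≤ 1 := by
          have : G.dist ystar y' ≤ (Walk.cons hadj Walk.nil).length := dist_le _
          simpa using this
        omega
      omega
    · -- otherwise ystar would lie on the geodesic from l0 to b
      exfalso
      have := tree_path_concat hT P Q hPpath hQpath (fun h => hcase (h.symm))
      apply hoff l0 hl0 b hb
      rw [dist_comm (u := l0) (v := ystar)]
      omega
  -- there is a point with positive weight
  have hpos : ∃ b ∈ Λ, 0 < w b := by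
    by_contra h
    push_neg at h
    have : ∑ x ∈ Λ, w x = 0 := Finset.sum_eq_zero fun x hx => le_antisymm (h x hx) (hw x)
    rw [hsum] at this
    norm_num at this
  obtain ⟨b₀, hb₀, hwb₀⟩ := hpos
  apply Finset.sum_lt_sum
  · intro i hi
    have hk := key i hi
    have hd : (G.dist y' i : ℝ) ^ 2 ≤ (G.dist ystar i : ℝ) ^ 2 := by
      have h1 : (G.dist y' i : ℝ) ≤ G.dist ystar i := by exact_mod_cast by omega
      have h2 : (0:ℝ) ≤ G.dist y' i := by positivity
      nlinarith
    exact mul_le_mul_of_nonneg_left hd (hw i)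
  · refine ⟨b₀, hb₀, ?_⟩
    have hk := key b₀ hb₀
    have hd : (G.dist y' b₀ : ℝ) ^ 2 < (G.dist ystar b₀ : ℝ) ^ 2 := by
      have h1 : (G.dist y' b₀ : ℝ) < G.dist ystar b₀ := by exact_mod_cast by omega
      have h2 : (0:ℝ) ≤ G.dist y' b₀ := by positivity
      nlinarith
    exact mul_lt_mul_of_pos_left hd hwb₀
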